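/- arXiv:0910.0695 — 2 statements merged into one kernel-verified Lean document; each statement's English description precedes it below -/
import Mathlib

section
/- Exponential formula, unital case: let (S, ⊕, σ, ε) be a locally finite SFD partial semigroup, R a commutative ℚ-algebra, and c : S → R a multiplicative equivariant statistics with c(ε) = 1. Then in R[[z]], EGF(S; z) = exp(EGF(atoms(S); z)), where exp(g) := ∑_{k≥0} gᵏ/k! (well defined since EGF(atoms(S); z) has zero constant term). -/
/-- A square-free decomposable (SFD) partial semigroup. -/
structure SFD (S : Type*) where
  eps : S
  op : S → S → S
  supp : S → Finset ℕ+
  supp_eq_empty : ∀ ω : S, supp ω = ∅ ↔ ω = eps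
  eps_op : ∀ ω : S, op eps ω = ω
  op_eps : ∀ ω : S, op ω eps = ω
  supp_op : ∀ ω₁ ω₂ : S, supp ω₁ ∩ supp ω₂ = ∅ →
      supp (op ω₁ ω₂) = supp ω₁ ∪ supp ω₂
  op_comm : ∀ ω₁ ω₂ : S, supp ω₁ ∩ supp ω₂ = ∅ → op ω₁ ω₂ = op ω₂ ω₁
  op_assoc : ∀ ω₁ ω₂ ω₃ : S, supp ω₁ ∩ supp ω₂ = ∅ →
      supp ω₁ ∩ supp ω₃ = ∅ → supp ω₂ ∩ supp ω₃ = ∅ →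
      op (op ω₁ ω₂) ω₃ = op ω₁ (op ω₂ ω₃)
  levi : ∀ a b c d : S, supp a ∩ supp b = ∅ → supp c ∩ supp d = ∅ →
      op a b = op c d →
      ∃ w11 w12 w21 w22 : S,
        supp w11 ∩ supp w12 = ∅ ∧ supp w21 ∩ supp w22 = ∅ ∧
        supp w11 ∩ supp w21 = ∅ ∧ supp w12 ∩ supp w22 = ∅ ∧
        a = op w11 w12 ∧ b = op w21 w22 ∧ c = op w11 w21 ∧ d = op w12 w22

/-- Iterated sum of a list of elements. -/
def SFD.opList {S : Type*} (P : SFD S) : List S → S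
  | [] => P.eps
  | a :: l => P.op a (P.opList l)

/-- Iterated sum of a finite family indexed by `Fin n`. -/
def SFD.opFam {S : Type*} (P : SFD S) {n : ℕ} (ω : Fin n → S) : S :=
  P.opList (List.ofFn ω)

/-- An atom: a nonunit element which cannot be split. -/
def SFD.IsAtom {S : Type*} (P : SFD S) (ω : S) : Prop :=
  ω ≠ P.eps ∧ ∀ ω₁ ω₂ : S, P.supp ω₁ ∩ P.supp ω₂ = ∅ → ω = P.op ω₁ ω₂ →
    ω₁ = P.eps ∨ ω₂ = P.eps

/-- The interval `[1..n]` as a finite set of positive integers. -/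
def pInterval (n : ℕ) : Finset ℕ+ :=
  (Finset.range n).image (fun i => ⟨i + 1, Nat.succ_pos i⟩)


/-- The exponential generating series of a subset `X ⊆ S` with respect to a
statistics `c`: `EGF(X; z) = ∑_{n ≥ 0} c(X_{[1..n]}) zⁿ/n!`. -/
noncomputable def EGF {S : Type*} {R : Type*} [CommRing R] [Algebra ℚ R]
    (P : SFD S) (c : S → R) (X : Set S) : PowerSeries R :=
  PowerSeries.mk fun n =>
    ((n.factorial : ℚ)⁻¹) • ∑ᶠ ω ∈ {w ∈ X | P.supp w = pInterval n}, c ω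

/-- The exponential `exp(g) = ∑_{k ≥ 0} gᵏ/k!` of a formal power series,
computed coefficientwise (the sum of the `n`-th coefficients of the `gᵏ/k!`
has finite support when `g` has zero constant term). -/
noncomputable def expPS {R : Type*} [CommRing R] [Algebra ℚ R]
    (g : PowerSeries R) : PowerSeries R :=
  PowerSeries.mk fun n =>
    ∑ᶠ k : ℕ, ((k.factorial : ℚ)⁻¹) • PowerSeries.coeff (R := R) n (g ^ k)

section ExpFormulaAux

open Finset

variable {S : Type*} {R : Type*} [CommRing R] [Algebra ℚ R]

lemma pInterval_zero : pInterval 0 = ∅ := by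
  simp only [pInterval, Finset.range_zero]; exact Finset.image_empty _

lemma pInterval_card (n : ℕ) : (pInterval n).card = n := by
  refine (Finset.card_image_of_injective (s := Finset.range n)
    (f := fun i : ℕ => (⟨i + 1, Nat.succ_pos i⟩ : ℕ+)) ?_).trans (Finset.card_range n)
  intro a b h
  have h2 := congrArg Subtype.val h
  simpa using h2

lemma one_mem_pInterval {n : ℕ} (h : 0 < n) : (⟨1, one_pos⟩ : ℕ+) ∈ pInterval n :=
  Finset.mem_image.mpr ⟨0, Finset.mem_range.mpr h, rfl⟩


namespace SFD

lemma inter_empty_mono {A B A' B' : Finset ℕ+} (hA : A' ⊆ A) (hB : B' ⊆ B)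
    (h : A ∩ B = ∅) : A' ∩ B' = ∅ := by
  rw [← Finset.disjoint_iff_inter_eq_empty] at h ⊢
  exact h.mono hA hB

variable (P : SFD S)

lemma supp_eps : P.supp P.eps = ∅ := (P.supp_eq_empty _).2 rfl

lemma ne_eps_of_mem_supp {p : ℕ+} {ω : S} (h : p ∈ P.supp ω) : ω ≠ P.eps := by
  intro he
  rw [he, P.supp_eps] at h
  exact absurd h (Finset.notMem_empty p)


lemma exists_atom_decomp_aux (p : ℕ+) :
    ∀ n (ω : S), (P.supp ω).card = n → p ∈ P.supp ω →
      ∃ α ρ : S, (P.IsAtom α ∧ p ∈ P.supp α) ∧ P.supp α ∩ P.supp ρ = ∅ ∧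
        ω = P.op α ρ := by
  intro n
  induction n using Nat.strong_induction_on with
  | _ n IH =>
    intro ω hcard hp
    by_cases ha : P.IsAtom ω
    · exact ⟨ω, P.eps, ⟨ha, hp⟩, by simp [P.supp_eps], (P.op_eps ω).symm⟩
    · have hne : ω ≠ P.eps := P.ne_eps_of_mem_supp hp
      have hB : ¬ ∀ ω₁ ω₂ : S, P.supp ω₁ ∩ P.supp ω₂ = ∅ → ω = P.op ω₁ ω₂ →
          ω₁ = P.eps ∨ ω₂ = P.eps := fun hB => ha ⟨hne, hB⟩
      push_neg at hB
      obtain ⟨ω₁, ω₂, hd, heq, h1, h2⟩ := hB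
      have hs : P.supp ω = P.supp ω₁ ∪ P.supp ω₂ := heq ▸ P.supp_op _ _ hd
      have hdisj : Disjoint (P.supp ω₁) (P.supp ω₂) :=
        Finset.disjoint_iff_inter_eq_empty.mpr hd
      have hpos1 : 0 < (P.supp ω₁).card := by
        rcases Finset.eq_empty_or_nonempty (P.supp ω₁) with h | h
        · exact absurd ((P.supp_eq_empty _).1 h) h1
        · exact Finset.card_pos.mpr h
      have hpos2 : 0 < (P.supp ω₂).card := by
        rcases Finset.eq_empty_or_nonempty (P.supp ω₂) with h | h
        · exact absurd ((P.supp_eq_empty _).1 h) h2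
        · exact Finset.card_pos.mpr h
      have hcards : (P.supp ω₁).card + (P.supp ω₂).card = n := by
        rw [← hcard, hs, Finset.card_union_of_disjoint hdisj]
      rcases Finset.mem_union.mp (hs ▸ hp) with hp1 | hp2
      · obtain ⟨α, ρ₁, ⟨hat, hpα⟩, hd1, hq1⟩ :=
          IH (P.supp ω₁).card (by omega) ω₁ rfl hp1
        have hs1 : P.supp ω₁ = P.supp α ∪ P.supp ρ₁ := hq1 ▸ P.supp_op _ _ hd1
        have hsubα : P.supp α ⊆ P.supp ω₁ := hs1 ▸ Finset.subset_union_left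
        have hsubρ : P.supp ρ₁ ⊆ P.supp ω₁ := hs1 ▸ Finset.subset_union_right
        have hd2 : P.supp α ∩ P.supp ω₂ = ∅ :=
          inter_empty_mono hsubα (subset_refl _) hd
        have hd3 : P.supp ρ₁ ∩ P.supp ω₂ = ∅ :=
          inter_empty_mono hsubρ (subset_refl _) hd
        refine ⟨α, P.op ρ₁ ω₂, ⟨hat, hpα⟩, ?_, ?_⟩
        · rw [P.supp_op _ _ hd3, Finset.inter_union_distrib_left, hd1, hd2,
            Finset.union_empty]
        · rw [heq, hq1, P.op_assoc _ _ _ hd1 hd2 hd3]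
      · obtain ⟨α, ρ₂, ⟨hat, hpα⟩, hd1, hq1⟩ :=
          IH (P.supp ω₂).card (by omega) ω₂ rfl hp2
        have hs1 : P.supp ω₂ = P.supp α ∪ P.supp ρ₂ := hq1 ▸ P.supp_op _ _ hd1
        have hsubα : P.supp α ⊆ P.supp ω₂ := hs1 ▸ Finset.subset_union_left
        have hsubρ : P.supp ρ₂ ⊆ P.supp ω₂ := hs1 ▸ Finset.subset_union_right
        have hd' : P.supp ω₂ ∩ P.supp ω₁ = ∅ := by
          rw [Finset.inter_comm]; exact hd
        have hd2 : P.supp α ∩ P.supp ω₁ = ∅ :=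
          inter_empty_mono hsubα (subset_refl _) hd'
        have hd3 : P.supp ρ₂ ∩ P.supp ω₁ = ∅ :=
          inter_empty_mono hsubρ (subset_refl _) hd'
        refine ⟨α, P.op ρ₂ ω₁, ⟨hat, hpα⟩, ?_, ?_⟩
        · rw [P.supp_op _ _ hd3, Finset.inter_union_distrib_left, hd1, hd2,
            Finset.union_empty]
        · rw [heq, P.op_comm _ _ hd, hq1, P.op_assoc _ _ _ hd1 hd2 hd3]

lemma exists_atom_decomp (p : ℕ+) (ω : S) (hp : p ∈ P.supp ω) :
    ∃ α ρ : S, (P.IsAtom α ∧ p ∈ P.supp α) ∧ P.supp α ∩ P.supp ρ = ∅ ∧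
      ω = P.op α ρ :=
  P.exists_atom_decomp_aux p _ ω rfl hp

lemma atom_decomp_unique {p : ℕ+} {α ρ α' ρ' : S}
    (hα : P.IsAtom α) (hpα : p ∈ P.supp α) (hdr : P.supp α ∩ P.supp ρ = ∅)
    (hα' : P.IsAtom α') (hpα' : p ∈ P.supp α') (hdr' : P.supp α' ∩ P.supp ρ' = ∅)
    (heq : P.op α ρ = P.op α' ρ') : α = α' ∧ ρ = ρ' := by
  obtain ⟨w11, w12, w21, w22, h1, h2, h3, h4, ha, hb, hc, hd⟩ :=
    P.levi α ρ α' ρ' hdr hdr' heq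
  rcases hα.2 w11 w12 h1 ha with h | h
  · -- w11 = eps : α = w12, then p ∈ supp ρ', contradiction
    exfalso
    rw [h, P.eps_op] at ha
    have hpρ' : p ∈ P.supp ρ' := by
      rw [hd, P.supp_op _ _ h4]
      exact Finset.mem_union_left _ (ha ▸ hpα)
    have : p ∈ P.supp α' ∩ P.supp ρ' := Finset.mem_inter.mpr ⟨hpα', hpρ'⟩
    rw [hdr'] at this
    exact absurd this (Finset.notMem_empty p)
  · -- w12 = eps : α = w11
    rw [h, P.op_eps] at ha
    rcases hα'.2 w11 w21 h3 hc with h' | h'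
    · exfalso
      exact P.ne_eps_of_mem_supp (ha ▸ hpα) h'
    · rw [h', P.op_eps] at hc
      refine ⟨by rw [ha, hc], ?_⟩
      rw [hb, h', P.eps_op, hd, h, P.eps_op]

lemma atoms_finite (hlf : ∀ F : Finset ℕ+, {ω : S | P.supp ω = F}.Finite)
    (F : Finset ℕ+) : {w : S | P.IsAtom w ∧ P.supp w = F}.Finite :=
  (hlf F).subset fun _ hw => hw.2

variable (hlf : ∀ F : Finset ℕ+, {ω : S | P.supp ω = F}.Finite) (c : S → R)

noncomputable def Wfin (F : Finset ℕ+) : Finset S := (hlf F).toFinset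

noncomputable def Afin (F : Finset ℕ+) : Finset S := (P.atoms_finite hlf F).toFinset

noncomputable def Wv (F : Finset ℕ+) : R := ∑ ω ∈ P.Wfin hlf F, c ω

noncomputable def Av (F : Finset ℕ+) : R := ∑ ω ∈ P.Afin hlf F, c ω

lemma mem_Wfin {F : Finset ℕ+} {ω : S} : ω ∈ P.Wfin hlf F ↔ P.supp ω = F := by
  rw [Wfin, Set.Finite.mem_toFinset]; rfl

lemma mem_Afin {F : Finset ℕ+} {ω : S} :
    ω ∈ P.Afin hlf F ↔ P.IsAtom ω ∧ P.supp ω = F := by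
  rw [Afin, Set.Finite.mem_toFinset]; rfl

noncomputable def decA (p : ℕ+) (ω : S) : S :=
  if h : p ∈ P.supp ω then (P.exists_atom_decomp p ω h).choose else P.eps

noncomputable def decR (p : ℕ+) (ω : S) : S :=
  if h : p ∈ P.supp ω then (P.exists_atom_decomp p ω h).choose_spec.choose else ω

lemma dec_spec {p : ℕ+} {ω : S} (h : p ∈ P.supp ω) :
    (P.IsAtom (P.decA p ω) ∧ p ∈ P.supp (P.decA p ω)) ∧
      P.supp (P.decA p ω) ∩ P.supp (P.decR p ω) = ∅ ∧
      ω = P.op (P.decA p ω) (P.decR p ω) := by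
  rw [decA, decR, dif_pos h, dif_pos h]
  exact (P.exists_atom_decomp p ω h).choose_spec.choose_spec

lemma dec_eq {p : ℕ+} {α ρ : S} (hα : P.IsAtom α) (hpα : p ∈ P.supp α)
    (hd : P.supp α ∩ P.supp ρ = ∅) :
    P.decA p (P.op α ρ) = α ∧ P.decR p (P.op α ρ) = ρ := by
  have hp : p ∈ P.supp (P.op α ρ) := by
    rw [P.supp_op _ _ hd]; exact Finset.mem_union_left _ hpα
  have hs := P.dec_spec hp
  exact P.atom_decomp_unique hs.1.1 hs.1.2 hs.2.1 hα hpα hd hs.2.2.symm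

lemma sum_decomp (hmul : ∀ ω₁ ω₂ : S, P.supp ω₁ ∩ P.supp ω₂ = ∅ →
      c (P.op ω₁ ω₂) = c ω₁ * c ω₂)
    (F : Finset ℕ+) (p : ℕ+) (hp : p ∈ F) :
    P.Wv hlf c F =
      ∑ B ∈ F.powerset.filter (fun B => p ∈ B),
        P.Av hlf c B * P.Wv hlf c (F \ B) := by
  have step1 : P.Wv hlf c F =
      ∑ x ∈ (F.powerset.filter (fun B => p ∈ B)).sigma
          (fun B => (P.Afin hlf B) ×ˢ (P.Wfin hlf (F \ B))),
        c x.2.1 * c x.2.2 := by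
    refine Finset.sum_bij'
      (fun ω _ => ⟨P.supp (P.decA p ω), (P.decA p ω, P.decR p ω)⟩)
      (fun x _ => P.op x.2.1 x.2.2) ?_ ?_ ?_ ?_ ?_
    · intro ω hω
      have hsupp : P.supp ω = F := (P.mem_Wfin hlf).mp hω
      have hpω : p ∈ P.supp ω := by rw [hsupp]; exact hp
      obtain ⟨⟨hat, hpα⟩, hdis, hopeq⟩ := P.dec_spec hpω
      have hsplit : F = P.supp (P.decA p ω) ∪ P.supp (P.decR p ω) := by
        have h := P.supp_op _ _ hdis
        rw [← hopeq] at h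
        rw [← hsupp, h]
      rw [Finset.mem_sigma, Finset.mem_filter, Finset.mem_powerset,
        Finset.mem_product, P.mem_Afin hlf, P.mem_Wfin hlf]
      refine ⟨⟨hsplit ▸ Finset.subset_union_left, hpα⟩, ⟨hat, rfl⟩, ?_⟩
      rw [hsplit]
      exact (Finset.union_sdiff_cancel_left
        (Finset.disjoint_iff_inter_eq_empty.mpr hdis)).symm
    · rintro ⟨B, α, ρ⟩ hx
      rw [Finset.mem_sigma, Finset.mem_filter, Finset.mem_powerset,
        Finset.mem_product, P.mem_Afin hlf, P.mem_Wfin hlf] at hx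
      obtain ⟨⟨hBF, hpB⟩, ⟨hat, hαB⟩, hρ⟩ := hx
      have hdis : P.supp α ∩ P.supp ρ = ∅ := by
        rw [hαB, hρ]; exact Finset.inter_sdiff_self B F
      rw [P.mem_Wfin hlf, P.supp_op _ _ hdis, hαB, hρ]
      exact Finset.union_sdiff_of_subset hBF
    · intro ω hω
      have hsupp : P.supp ω = F := (P.mem_Wfin hlf).mp hω
      have hpω : p ∈ P.supp ω := by rw [hsupp]; exact hp
      exact (P.dec_spec hpω).2.2.symm
    · rintro ⟨B, α, ρ⟩ hx
      rw [Finset.mem_sigma, Finset.mem_filter, Finset.mem_powerset,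
        Finset.mem_product, P.mem_Afin hlf, P.mem_Wfin hlf] at hx
      obtain ⟨⟨hBF, hpB⟩, ⟨hat, hαB⟩, hρ⟩ := hx
      have hdis : P.supp α ∩ P.supp ρ = ∅ := by
        rw [hαB, hρ]; exact Finset.inter_sdiff_self B F
      obtain ⟨h1, h2⟩ := P.dec_eq hat (hαB ▸ hpB) hdis
      simp only [h1, h2, hαB]
    · intro ω hω
      have hsupp : P.supp ω = F := (P.mem_Wfin hlf).mp hω
      have hpω : p ∈ P.supp ω := by rw [hsupp]; exact hp
      obtain ⟨⟨hat, hpα⟩, hdis, hopeq⟩ := P.dec_spec hpω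
      calc c ω = c (P.op (P.decA p ω) (P.decR p ω)) := by rw [← hopeq]
      _ = c (P.decA p ω) * c (P.decR p ω) := hmul _ _ hdis
  rw [step1, Finset.sum_sigma]
  refine Finset.sum_congr rfl fun B _ => ?_
  dsimp only
  rw [Av, Wv, Finset.sum_mul_sum]
  exact Finset.sum_product _ _ _

lemma sum_filter_powerset (F : Finset ℕ+) (p : ℕ+) (hp : p ∈ F) (u : ℕ → R) :
    ∑ B ∈ F.powerset.filter (fun B => p ∈ B), u B.card
      = ∑ m ∈ Finset.range F.card, (F.card - 1).choose m • u (m + 1) := by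
  have h1 : ∑ B ∈ F.powerset.filter (fun B => p ∈ B), u B.card
      = ∑ B ∈ (F.erase p).powerset, u (B.card + 1) := by
    refine Finset.sum_bij' (fun B _ => B.erase p) (fun B _ => insert p B)
      ?_ ?_ ?_ ?_ ?_
    · intro B hB
      rw [Finset.mem_filter, Finset.mem_powerset] at hB
      exact Finset.mem_powerset.mpr (Finset.erase_subset_erase p hB.1)
    · intro B hB
      rw [Finset.mem_powerset] at hB
      rw [Finset.mem_filter, Finset.mem_powerset]
      exact ⟨Finset.insert_subset hp (hB.trans (Finset.erase_subset p F)),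
        Finset.mem_insert_self p B⟩
    · intro B hB
      rw [Finset.mem_filter] at hB
      exact Finset.insert_erase hB.2
    · intro B hB
      rw [Finset.mem_powerset] at hB
      exact Finset.erase_insert (fun h => (Finset.mem_erase.mp (hB h)).1 rfl)
    · intro B hB
      rw [Finset.mem_filter] at hB
      rw [Finset.card_erase_add_one hB.2]
  rw [h1, Finset.sum_powerset, Finset.card_erase_add_one hp]
  refine Finset.sum_congr rfl fun m _ => ?_
  rw [Finset.sum_congr rfl
      (fun B hB => by rw [(Finset.mem_powersetCard.mp hB).2] :
        ∀ B ∈ Finset.powersetCard m (F.erase p), u (B.card + 1) = u (m + 1)),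
    Finset.sum_const, Finset.card_powersetCard, Finset.card_erase_of_mem hp]

lemma Wv_empty (heps : c P.eps = 1) : P.Wv hlf c ∅ = 1 := by
  have h : P.Wfin hlf ∅ = {P.eps} := by
    ext ω
    rw [P.mem_Wfin hlf, Finset.mem_singleton, P.supp_eq_empty]
  rw [Wv, h, Finset.sum_singleton, heps]

lemma Av_empty : P.Av hlf c ∅ = 0 := by
  have h : P.Afin hlf ∅ = ∅ := by
    ext ω
    rw [P.mem_Afin hlf]
    simp only [Finset.notMem_empty, iff_false]
    rintro ⟨⟨hne, -⟩, hs⟩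
    exact hne ((P.supp_eq_empty ω).mp hs)
  rw [Av, h, Finset.sum_empty]

lemma Wv_card (hmul : ∀ ω₁ ω₂ : S, P.supp ω₁ ∩ P.supp ω₂ = ∅ →
      c (P.op ω₁ ω₂) = c ω₁ * c ω₂)
    (heqv : ∀ F₁ F₂ : Finset ℕ+, F₁.card = F₂.card →
      P.Av hlf c F₁ = P.Av hlf c F₂) :
    ∀ n (F : Finset ℕ+), F.card = n → P.Wv hlf c F = P.Wv hlf c (pInterval n) := by
  intro n
  induction n using Nat.strong_induction_on with
  | _ n IH =>
    intro F hF
    rcases Nat.eq_zero_or_pos n with h0 | hpos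
    · subst h0
      rw [Finset.card_eq_zero.mp hF, pInterval_zero]
    · have key : ∀ (G : Finset ℕ+) (q : ℕ+), G.card = n → q ∈ G →
          P.Wv hlf c G = ∑ m ∈ Finset.range n, (n - 1).choose m •
            (P.Av hlf c (pInterval (m + 1)) *
              P.Wv hlf c (pInterval (n - (m + 1)))) := by
        intro G q hG hq
        rw [P.sum_decomp hlf c hmul G q hq]
        have hterm : ∀ B ∈ G.powerset.filter (fun B => q ∈ B),
            P.Av hlf c B * P.Wv hlf c (G \ B)
              = (fun m => P.Av hlf c (pInterval m) *
                  P.Wv hlf c (pInterval (n - m))) B.card := by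
          intro B hB
          rw [Finset.mem_filter, Finset.mem_powerset] at hB
          have hcard : (G \ B).card = n - B.card := by
            rw [Finset.card_sdiff_of_subset hB.1, hG]
          have hBpos : 0 < B.card := Finset.card_pos.mpr ⟨q, hB.2⟩
          have hlt : n - B.card < n := Nat.sub_lt hpos hBpos
          dsimp only
          rw [heqv B (pInterval B.card) (pInterval_card B.card).symm,
            IH (n - B.card) hlt (G \ B) hcard]
        have hs := sum_filter_powerset (R := R) G q hq
          (fun m => P.Av hlf c (pInterval m) * P.Wv hlf c (pInterval (n - m)))
        rw [hG] at hs
        exact (Finset.sum_congr rfl hterm).trans hs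
      obtain ⟨p, hp⟩ := Finset.card_pos.mp (hF ▸ hpos)
      rw [key F p hF hp,
        key (pInterval n) ⟨1, one_pos⟩ (pInterval_card n) (one_mem_pInterval hpos)]

lemma Wv_rec (hmul : ∀ ω₁ ω₂ : S, P.supp ω₁ ∩ P.supp ω₂ = ∅ →
      c (P.op ω₁ ω₂) = c ω₁ * c ω₂)
    (heqv : ∀ F₁ F₂ : Finset ℕ+, F₁.card = F₂.card →
      P.Av hlf c F₁ = P.Av hlf c F₂) (n : ℕ) :
    P.Wv hlf c (pInterval (n + 1)) = ∑ m ∈ Finset.range (n + 1), n.choose m •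
      (P.Av hlf c (pInterval (m + 1)) * P.Wv hlf c (pInterval (n - m))) := by
  rw [P.sum_decomp hlf c hmul (pInterval (n + 1)) ⟨1, one_pos⟩
      (one_mem_pInterval n.succ_pos)]
  have hterm : ∀ B ∈ (pInterval (n + 1)).powerset.filter
      (fun B => (1 : ℕ+) ∈ B),
      P.Av hlf c B * P.Wv hlf c (pInterval (n + 1) \ B)
        = (fun m => P.Av hlf c (pInterval m) *
            P.Wv hlf c (pInterval (n + 1 - m))) B.card := by
    intro B hB
    rw [Finset.mem_filter, Finset.mem_powerset] at hB
    have hcard : (pInterval (n + 1) \ B).card = n + 1 - B.card := by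
      rw [Finset.card_sdiff_of_subset hB.1, pInterval_card]
    dsimp only
    rw [heqv B (pInterval B.card) (pInterval_card B.card).symm,
      P.Wv_card hlf c hmul heqv (n + 1 - B.card) _ hcard]
  have hs := sum_filter_powerset (R := R) (pInterval (n + 1)) ⟨1, one_pos⟩
    (one_mem_pInterval n.succ_pos)
    (fun m => P.Av hlf c (pInterval m) * P.Wv hlf c (pInterval (n + 1 - m)))
  rw [pInterval_card] at hs
  simp only [Nat.add_sub_cancel, Nat.succ_sub_succ] at hs
  refine (Finset.sum_congr rfl hterm).trans ?_
  simpa using hs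

end SFD

open PowerSeries in
lemma coeff_pow_eq_zero {g : PowerSeries R} (h : constantCoeff g = 0) :
    ∀ k n : ℕ, n < k → coeff n (g ^ k) = 0 := by
  intro k
  induction k with
  | zero => exact fun n hn => absurd hn (Nat.not_lt_zero n)
  | succ k IH =>
    intro n hn
    rw [pow_succ, coeff_mul]
    refine Finset.sum_eq_zero fun p hp => ?_
    have hpn : p.1 + p.2 = n := Finset.HasAntidiagonal.mem_antidiagonal.mp hp
    rcases lt_or_ge p.1 k with h1 | h1
    · rw [IH p.1 h1, zero_mul]
    · have hp2 : p.2 = 0 := by omega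
      rw [hp2, coeff_zero_eq_constantCoeff, h, mul_zero]

open PowerSeries in
lemma expPS_coeff {g : PowerSeries R} (h : constantCoeff g = 0) (n : ℕ) :
    coeff n (expPS g) = ∑ k ∈ Finset.range (n + 1),
      ((k.factorial : ℚ)⁻¹) • coeff n (g ^ k) := by
  rw [expPS, coeff_mk]
  apply finsum_eq_sum_of_support_subset
  intro k hk
  rw [Function.mem_support] at hk
  rw [Finset.coe_range, Set.mem_Iio]
  by_contra hkn
  exact hk (by rw [coeff_pow_eq_zero h k n (by omega), smul_zero])

open PowerSeries in
lemma expPS_coeff_zero {g : PowerSeries R} (h : constantCoeff g = 0) :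
    coeff 0 (expPS g) = 1 := by
  rw [expPS_coeff h 0]
  simp

lemma fact_succ_inv (k : ℕ) :
    (((k + 1).factorial : ℚ))⁻¹ * ((k : ℚ) + 1) = ((k.factorial : ℚ))⁻¹ := by
  have h1 : (((k + 1).factorial : ℚ)) = ((k : ℚ) + 1) * (k.factorial : ℚ) := by
    rw [Nat.factorial_succ]; push_cast; ring
  have h2 : ((k : ℚ) + 1) ≠ 0 := by positivity
  have h3 : ((k.factorial : ℚ)) ≠ 0 := by
    exact_mod_cast Nat.cast_ne_zero.mpr k.factorial_ne_zero
  rw [h1, mul_inv]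
  field_simp

open PowerSeries in
lemma nat_smul_key (n : ℕ) (x : R) : ((n : ℚ) + 1) • x = x * ((n : R) + 1) := by
  rw [Algebra.smul_def]
  have h : (algebraMap ℚ R) ((n : ℚ) + 1) = (n : R) + 1 := by
    rw [map_add, map_one, map_natCast]
  rw [h, mul_comm]

open PowerSeries in
lemma expPS_rec {g : PowerSeries R} (h : constantCoeff g = 0) (n : ℕ) :
    ((n : ℚ) + 1) • coeff (n + 1) (expPS g)
      = ∑ i ∈ Finset.range (n + 1),
          coeff i (derivative R g) * coeff (n - i) (expPS g) := by
  rw [expPS_coeff h (n + 1), Finset.smul_sum]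
  have hterm1 : ∀ k ∈ Finset.range (n + 2),
      ((n : ℚ) + 1) • (((k.factorial : ℚ)⁻¹) • coeff (n + 1) (g ^ k))
        = ((k.factorial : ℚ)⁻¹) • coeff n ((derivative R) (g ^ k)) := by
    intro k _
    rw [smul_comm, coeff_derivative, ← nat_smul_key]
  rw [Finset.sum_congr rfl hterm1, Finset.sum_range_succ']
  have hzero : (((Nat.factorial 0 : ℕ) : ℚ)⁻¹) • coeff n ((derivative R) (g ^ 0)) = 0 := by
    rw [pow_zero, Derivation.map_one_eq_zero, map_zero, smul_zero]
  rw [hzero, add_zero]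
  have hterm2 : ∀ k ∈ Finset.range (n + 1),
      ((((k + 1).factorial : ℕ) : ℚ)⁻¹) • coeff n ((derivative R) (g ^ (k + 1)))
        = ((k.factorial : ℚ)⁻¹) • coeff n ((derivative R) g * g ^ k) := by
    intro k _
    have e1 : (derivative R) (g ^ (k + 1)) = (k + 1) • ((derivative R) g * g ^ k) := by
      rw [Derivation.leibniz_pow, Nat.add_sub_cancel, smul_eq_mul, mul_comm]
    rw [e1, map_nsmul, ← Nat.cast_smul_eq_nsmul ℚ, smul_smul]
    congr 1
    push_cast
    exact fact_succ_inv k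
  rw [Finset.sum_congr rfl hterm2]
  have hrhs : ∀ i ∈ Finset.range (n + 1),
      coeff i ((derivative R) g) * coeff (n - i) (expPS g)
        = ∑ k ∈ Finset.range (n + 1), ((k.factorial : ℚ)⁻¹) •
            (coeff i ((derivative R) g) * coeff (n - i) (g ^ k)) := by
    intro i hi
    rw [expPS_coeff h (n - i)]
    have e1 : ∀ k ∈ Finset.range (n + 1),
        ((k.factorial : ℚ)⁻¹) • (coeff i ((derivative R) g) * coeff (n - i) (g ^ k))
          = coeff i ((derivative R) g) * (((k.factorial : ℚ)⁻¹) • coeff (n - i) (g ^ k)) :=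
      fun k _ => (mul_smul_comm _ _ _).symm
    rw [Finset.sum_congr rfl e1, ← Finset.mul_sum]
    congr 1
    apply Finset.sum_subset (Finset.range_subset_range.mpr (by omega : n - i + 1 ≤ n + 1))
    intro k hk hk2
    rw [Finset.mem_range] at hk hk2
    rw [coeff_pow_eq_zero h k (n - i) (by omega), smul_zero]
  rw [Finset.sum_congr rfl hrhs, Finset.sum_comm]
  refine Finset.sum_congr rfl fun k _ => ?_
  rw [← Finset.smul_sum]
  congr 1
  rw [coeff_mul, Finset.Nat.sum_antidiagonal_eq_sum_range_succ_mk]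

lemma rec_unique (u v : ℕ → R) (d : ℕ → R) (h0 : u 0 = v 0)
    (hu : ∀ n : ℕ, ((n : ℚ) + 1) • u (n + 1) = ∑ i ∈ Finset.range (n + 1), d i * u (n - i))
    (hv : ∀ n : ℕ, ((n : ℚ) + 1) • v (n + 1) = ∑ i ∈ Finset.range (n + 1), d i * v (n - i)) :
    ∀ n, u n = v n := by
  intro n
  induction n using Nat.strong_induction_on with
  | _ n IH =>
    match n with
    | 0 => exact h0
    | Nat.succ m =>
      have h1 : ((m : ℚ) + 1) ≠ 0 := by positivity
      have h2 : ((m : ℚ) + 1) • u (m + 1) = ((m : ℚ) + 1) • v (m + 1) := by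
        rw [hu m, hv m]
        exact Finset.sum_congr rfl fun i _ => by rw [IH (m - i) (by omega)]
      calc u (m + 1) = ((m : ℚ) + 1)⁻¹ • (((m : ℚ) + 1) • u (m + 1)) :=
            (inv_smul_smul₀ h1 _).symm
        _ = ((m : ℚ) + 1)⁻¹ • (((m : ℚ) + 1) • v (m + 1)) := by rw [h2]
        _ = v (m + 1) := inv_smul_smul₀ h1 _

end ExpFormulaAux

/-- exponential formula, unital case: for a locally finite SFD
partial semigroup and a multiplicative equivariant statistics `c` with
`c(ε) = 1`, `EGF(S; z) = exp(EGF(atoms(S); z))` in `R[[z]]`. -/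
theorem exponential_formula_unital {S : Type*} {R : Type*} [CommRing R]
    [Algebra ℚ R] (P : SFD S)
    (hlf : ∀ F : Finset ℕ+, {ω : S | P.supp ω = F}.Finite)
    (c : S → R)
    (hmul : ∀ ω₁ ω₂ : S, P.supp ω₁ ∩ P.supp ω₂ = ∅ →
      c (P.op ω₁ ω₂) = c ω₁ * c ω₂)
    (heqv : ∀ F₁ F₂ : Finset ℕ+, F₁.card = F₂.card →
      (∑ᶠ ω ∈ {w : S | P.IsAtom w ∧ P.supp w = F₁}, c ω)
        = ∑ᶠ ω ∈ {w : S | P.IsAtom w ∧ P.supp w = F₂}, c ω)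
    (heps : c P.eps = 1) :
    EGF P c Set.univ = expPS (EGF P c {w : S | P.IsAtom w}) := by
  classical
  set g : PowerSeries R := EGF P c {w : S | P.IsAtom w} with hgdef
  have hAv : ∀ F : Finset ℕ+,
      (∑ᶠ ω ∈ {w : S | P.IsAtom w ∧ P.supp w = F}, c ω) = P.Av hlf c F := by
    intro F
    rw [SFD.Av, SFD.Afin]
    exact finsum_mem_eq_finite_toFinset_sum c (P.atoms_finite hlf F)
  have heqv' : ∀ F₁ F₂ : Finset ℕ+, F₁.card = F₂.card →
      P.Av hlf c F₁ = P.Av hlf c F₂ := by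
    intro F₁ F₂ h12
    rw [← hAv F₁, ← hAv F₂]
    exact heqv F₁ F₂ h12
  have hfcoeff : ∀ n : ℕ, PowerSeries.coeff n (EGF P c Set.univ)
      = ((n.factorial : ℚ)⁻¹) • P.Wv hlf c (pInterval n) := by
    intro n
    rw [EGF, PowerSeries.coeff_mk]
    congr 1
    have hset : {w ∈ Set.univ | P.supp w = pInterval n}
        = {ω : S | P.supp ω = pInterval n} := by ext w; simp
    rw [hset, SFD.Wv, SFD.Wfin]
    exact finsum_mem_eq_finite_toFinset_sum c (hlf (pInterval n))
  have hgcoeff : ∀ n : ℕ, PowerSeries.coeff n g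
      = ((n.factorial : ℚ)⁻¹) • P.Av hlf c (pInterval n) := by
    intro n
    rw [hgdef, EGF, PowerSeries.coeff_mk]
    congr 1
    exact hAv (pInterval n)
  have hg0 : PowerSeries.constantCoeff g = 0 := by
    rw [← PowerSeries.coeff_zero_eq_constantCoeff, hgcoeff 0, pInterval_zero,
      P.Av_empty hlf c, smul_zero]
  have hdg : ∀ i : ℕ, PowerSeries.coeff i (PowerSeries.derivative R g)
      = ((i.factorial : ℚ)⁻¹) • P.Av hlf c (pInterval (i + 1)) := by
    intro i
    rw [PowerSeries.coeff_derivative, hgcoeff (i + 1), ← nat_smul_key, smul_smul]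
    congr 1
    rw [mul_comm]
    exact_mod_cast fact_succ_inv i
  have hfrec : ∀ n : ℕ, ((n : ℚ) + 1) • PowerSeries.coeff (n + 1) (EGF P c Set.univ)
      = ∑ i ∈ Finset.range (n + 1),
          (PowerSeries.coeff i (PowerSeries.derivative R g)) *
            PowerSeries.coeff (n - i) (EGF P c Set.univ) := by
    intro n
    rw [hfcoeff (n + 1), smul_smul]
    have hl : ((n : ℚ) + 1) * (((n + 1).factorial : ℚ))⁻¹ = ((n.factorial : ℚ))⁻¹ := by
      rw [mul_comm]; exact_mod_cast fact_succ_inv n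
    rw [hl, P.Wv_rec hlf c hmul heqv' n, Finset.smul_sum]
    refine Finset.sum_congr rfl fun m hm => ?_
    rw [Finset.mem_range] at hm
    rw [hdg m, hfcoeff (n - m), smul_mul_assoc, mul_smul_comm, smul_smul,
      ← Nat.cast_smul_eq_nsmul ℚ, smul_smul]
    congr 1
    rw [Nat.cast_choose ℚ (by omega : m ≤ n)]
    have h1 : ((n.factorial : ℚ)) ≠ 0 := Nat.cast_ne_zero.mpr n.factorial_ne_zero
    have h2 : ((m.factorial : ℚ)) ≠ 0 := Nat.cast_ne_zero.mpr m.factorial_ne_zero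
    have h3 : (((n - m).factorial : ℚ)) ≠ 0 :=
      Nat.cast_ne_zero.mpr (n - m).factorial_ne_zero
    field_simp
  have hf0 : PowerSeries.coeff 0 (EGF P c Set.univ) = 1 := by
    rw [hfcoeff 0, pInterval_zero, P.Wv_empty hlf c heps]
    simp
  refine PowerSeries.ext fun n => ?_
  exact rec_unique (fun n => PowerSeries.coeff n (EGF P c Set.univ))
    (fun n => PowerSeries.coeff n (expPS g))
    (fun i => PowerSeries.coeff i (PowerSeries.derivative R g))
    (by show PowerSeries.coeff 0 (EGF P c Set.univ) = PowerSeries.coeff 0 (expPS g)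
        rw [hf0, expPS_coeff_zero hg0])
    hfrec (fun n => expPS_rec hg0 n) n
end

section
/- Classical exponential formula for formal power series: let R be a commutative ℚ-algebra, (fₙ)_{n≥1} a sequence in R, and f := ∑_{n≥1} fₙ zⁿ/n! ∈ R[[z]]. Then exp(f) = ∑_{n≥0} aₙ zⁿ/n!, where a₀ = 1 and, for n ≥ 1, aₙ = ∑_{π ∈ Πₙ} ∏_{p ∈ π} f_{card p}, with Πₙ the set of all set partitions of {1, …, n} into nonempty blocks. Equivalently, for every n ≥ 0, n! · (coefficient of zⁿ in exp(f)) = ∑_{π ∈ Πₙ} ∏_{p ∈ π} f_{card p}. -/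
open scoped Classical in
/-- The (finite) set of set partitions of `{1, …, n}` into nonempty blocks. -/
noncomputable def natPartitionsOf (n : ℕ) : Finset (Finset (Finset ℕ)) :=
  ((Finset.Icc 1 n).powerset.powerset).filter
    (fun π => ∅ ∉ π ∧ (∀ p ∈ π, ∀ q ∈ π, p ≠ q → p ∩ q = ∅) ∧
      π.sup id = Finset.Icc 1 n)

namespace ExpFormula

open Finset


open scoped Classical in
noncomputable def partsOf (s : Finset ℕ) : Finset (Finset (Finset ℕ)) :=
  (s.powerset.powerset).filter
    (fun π => ∅ ∉ π ∧ (∀ p ∈ π, ∀ q ∈ π, p ≠ q → p ∩ q = ∅) ∧ π.sup id = s)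

lemma mem_partsOf {s : Finset ℕ} {π : Finset (Finset ℕ)} :
    π ∈ partsOf s ↔ ∅ ∉ π ∧ (∀ p ∈ π, ∀ q ∈ π, p ≠ q → p ∩ q = ∅) ∧ π.sup id = s := by
  classical
  constructor
  · intro h; exact (Finset.mem_filter.1 h).2
  · intro h
    refine Finset.mem_filter.2 ⟨?_, h⟩
    rw [Finset.mem_powerset]
    intro p hp
    rw [Finset.mem_powerset, ← h.2.2]
    exact Finset.le_sup (f := id) hp

noncomputable def blk (a : ℕ) (π : Finset (Finset ℕ)) : Finset ℕ :=
  π.sup (fun q => if a ∈ q then q else ∅)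

lemma blk_eq {a : ℕ} {π : Finset (Finset ℕ)}
    (hdisj : ∀ p ∈ π, ∀ q ∈ π, p ≠ q → p ∩ q = ∅)
    {p : Finset ℕ} (hp : p ∈ π) (hap : a ∈ p) : blk a π = p := by
  apply le_antisymm
  · apply Finset.sup_le
    intro q hq
    by_cases haq : a ∈ q
    · rw [if_pos haq]
      by_cases hqp : q = p
      · exact hqp.le
      · exfalso
        have := hdisj q hq p hp hqp
        have : a ∈ q ∩ p := Finset.mem_inter.2 ⟨haq, hap⟩
        rw [hdisj q hq p hp hqp] at this
        exact absurd this (Finset.notMem_empty a)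
    · rw [if_neg haq]
      exact Finset.empty_subset p
  · have := Finset.le_sup (s := π) (f := fun q => if a ∈ q then q else ∅) hp
    simp only [if_pos hap] at this
    exact this


lemma blk_spec {a : ℕ} {t : Finset ℕ} {π : Finset (Finset ℕ)}
    (hπ : π ∈ partsOf (insert a t)) : blk a π ∈ π ∧ a ∈ blk a π := by
  obtain ⟨hne, hdisj, hsup⟩ := mem_partsOf.1 hπ
  have haa : a ∈ π.sup id := by rw [hsup]; exact Finset.mem_insert_self a t
  rw [Finset.mem_sup] at haa
  obtain ⟨p, hp, hap⟩ := haa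
  rw [blk_eq hdisj hp hap]
  exact ⟨hp, hap⟩

lemma insert_mem_partsOf {a : ℕ} {t B : Finset ℕ} {ρ : Finset (Finset ℕ)}
    (ha : a ∉ t) (hB : B ⊆ t) (hρ : ρ ∈ partsOf (t \ B)) :
    insert (insert a B) ρ ∈ partsOf (insert a t) := by
  classical
  obtain ⟨hne, hdisj, hsup⟩ := mem_partsOf.1 hρ
  have hsubρ : ∀ q ∈ ρ, q ⊆ t \ B := by
    intro q hq
    rw [← hsup]
    exact Finset.le_sup (f := id) hq
  have hdisjoint : ∀ q ∈ ρ, insert a B ∩ q = ∅ := by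
    intro q hq
    apply Finset.eq_empty_of_forall_notMem
    intro x hx
    rw [Finset.mem_inter, Finset.mem_insert] at hx
    obtain ⟨hx1 | hx1, hx2⟩ := hx
    · subst hx1
      have := Finset.mem_sdiff.1 (hsubρ q hq hx2)
      exact ha this.1
    · have := Finset.mem_sdiff.1 (hsubρ q hq hx2)
      exact this.2 hx1
  rw [mem_partsOf]
  refine ⟨?_, ?_, ?_⟩
  · intro hmem
    rcases Finset.mem_insert.1 hmem with h | h
    · exact absurd h.symm (Finset.insert_ne_empty a B)
    · exact hne h
  · intro p hp q hq hpq
    rcases Finset.mem_insert.1 hp with h1 | h1 <;> rcases Finset.mem_insert.1 hq with h2 | h2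
    · exact absurd (h1.trans h2.symm) hpq
    · exact h1 ▸ hdisjoint q h2
    · rw [Finset.inter_comm]
      exact h2 ▸ hdisjoint p h1
    · exact hdisj p h1 q h2 hpq
  · rw [Finset.sup_insert, hsup]
    ext x
    simp only [id, Finset.mem_union, Finset.mem_insert, Finset.mem_sdiff, Finset.sup_eq_union]
    constructor
    · rintro (( h | h) | ⟨h, _⟩)
      · exact Or.inl h
      · exact Or.inr (hB h)
      · exact Or.inr h
    · rintro (h | h)
      · exact Or.inl (Or.inl h)
      · by_cases hxB : x ∈ B
        · exact Or.inl (Or.inr hxB)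
        · exact Or.inr ⟨h, hxB⟩

lemma blk_insert {a : ℕ} {t B : Finset ℕ} {ρ : Finset (Finset ℕ)}
    (ha : a ∉ t) (hB : B ⊆ t) (hρ : ρ ∈ partsOf (t \ B)) :
    blk a (insert (insert a B) ρ) = insert a B := by
  have hmem := insert_mem_partsOf ha hB hρ
  obtain ⟨_, hdisj, _⟩ := mem_partsOf.1 hmem
  exact blk_eq hdisj (Finset.mem_insert_self _ _) (Finset.mem_insert_self a B)

lemma insertaB_not_mem {a : ℕ} {t B : Finset ℕ} {ρ : Finset (Finset ℕ)}
    (ha : a ∉ t) (hρ : ρ ∈ partsOf (t \ B)) : insert a B ∉ ρ := by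
  intro hmem
  obtain ⟨_, _, hsup⟩ := mem_partsOf.1 hρ
  have : (insert a B : Finset ℕ) ⊆ t \ B := by
    rw [← hsup]; exact Finset.le_sup (f := id) hmem
  have := Finset.mem_sdiff.1 (this (Finset.mem_insert_self a B))
  exact ha this.1

lemma erase_mem_partsOf {a : ℕ} {t : Finset ℕ} {π : Finset (Finset ℕ)}
    (ha : a ∉ t) (hπ : π ∈ partsOf (insert a t)) :
    π.erase (blk a π) ∈ partsOf (t \ (blk a π).erase a) := by
  classical
  obtain ⟨hne, hdisj, hsup⟩ := mem_partsOf.1 hπ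
  obtain ⟨hbmem, habmem⟩ := blk_spec hπ
  rw [mem_partsOf]
  refine ⟨fun h => hne (Finset.mem_of_mem_erase h), ?_, ?_⟩
  · intro p hp q hq hpq
    exact hdisj p (Finset.mem_of_mem_erase hp) q (Finset.mem_of_mem_erase hq) hpq
  · ext x
    rw [Finset.mem_sup]
    simp only [Finset.mem_erase, id, Finset.mem_sdiff]
    constructor
    · rintro ⟨q, ⟨hqb, hq⟩, hxq⟩
      have hxs : x ∈ insert a t := by
        rw [← hsup]
        rw [Finset.mem_sup]
        exact ⟨q, hq, hxq⟩
      have hxblk : x ∉ blk a π := by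
        intro hxb
        have h := hdisj q hq (blk a π) hbmem hqb
        have : x ∈ q ∩ blk a π := Finset.mem_inter.2 ⟨hxq, hxb⟩
        rw [h] at this
        exact absurd this (Finset.notMem_empty x)
      have hxa : x ≠ a := fun h => hxblk (h ▸ habmem)
      rcases Finset.mem_insert.1 hxs with h | h
      · exact absurd h hxa
      · exact ⟨h, fun hc => hxblk hc.2⟩
    · rintro ⟨hxt, hxB⟩
      have hxa : x ≠ a := fun h => ha (h ▸ hxt)
      have hxblk : x ∉ blk a π := fun h => hxB ⟨hxa, h⟩
      have hxs : x ∈ π.sup id := by rw [hsup]; exact Finset.mem_insert_of_mem hxt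
      rw [Finset.mem_sup] at hxs
      obtain ⟨q, hq, hxq⟩ := hxs
      exact ⟨q, ⟨fun h => hxblk (h ▸ hxq), hq⟩, hxq⟩

section
variable {R : Type*} [CommRing R] (f : ℕ → R)

lemma sum_partsOf_insert {a : ℕ} {t : Finset ℕ} (ha : a ∉ t) :
    ∑ π ∈ partsOf (insert a t), ∏ p ∈ π, f p.card
      = ∑ B ∈ t.powerset, f (B.card + 1) * ∑ ρ ∈ partsOf (t \ B), ∏ p ∈ ρ, f p.card := by
  classical
  have hrw : ∀ B ∈ t.powerset, f (B.card + 1) * ∑ ρ ∈ partsOf (t \ B), ∏ p ∈ ρ, f p.card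
      = ∑ ρ ∈ partsOf (t \ B), f (B.card + 1) * ∏ p ∈ ρ, f p.card := fun B _ => Finset.mul_sum _ _ _
  rw [Finset.sum_congr rfl hrw]
  have hsig := Finset.sum_sigma t.powerset (fun B => partsOf (t \ B))
      (fun x => f (x.1.card + 1) * ∏ p ∈ x.2, f p.card)
  rw [← hsig]
  refine Finset.sum_nbij' (fun π => (⟨(blk a π).erase a, π.erase (blk a π)⟩ : Σ _ : Finset ℕ, Finset (Finset ℕ)))
    (fun x => insert (insert a x.1) x.2) ?_ ?_ ?_ ?_ ?_
  · intro π hπ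
    obtain ⟨hbmem, habmem⟩ := blk_spec hπ
    obtain ⟨hne, hdisj, hsup⟩ := mem_partsOf.1 hπ
    rw [Finset.mem_sigma]
    constructor
    · rw [Finset.mem_powerset]
      intro x hx
      rw [Finset.mem_erase] at hx
      have : x ∈ insert a t := by
        rw [← hsup]
        rw [Finset.mem_sup]
        exact ⟨blk a π, hbmem, hx.2⟩
      rcases Finset.mem_insert.1 this with h | h
      · exact absurd h hx.1
      · exact h
    · exact erase_mem_partsOf ha hπ
  · rintro ⟨B, ρ⟩ hx
    rw [Finset.mem_sigma, Finset.mem_powerset] at hx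
    exact insert_mem_partsOf ha hx.1 hx.2
  · intro π hπ
    obtain ⟨hbmem, habmem⟩ := blk_spec hπ
    simp only
    rw [Finset.insert_erase habmem, Finset.insert_erase hbmem]
  · rintro ⟨B, ρ⟩ hx
    rw [Finset.mem_sigma, Finset.mem_powerset] at hx
    obtain ⟨hB, hρ⟩ := hx
    have haB : a ∉ B := fun h => ha (hB h)
    simp only
    rw [blk_insert ha hB hρ, Finset.erase_insert haB,
      Finset.erase_insert (insertaB_not_mem ha hρ)]
  · intro π hπ
    obtain ⟨hbmem, habmem⟩ := blk_spec hπ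
    simp only
    rw [← Finset.mul_prod_erase π (fun p => f p.card) hbmem]
    congr 2
    rw [Finset.card_erase_of_mem habmem]
    have : 0 < (blk a π).card := Finset.card_pos.2 ⟨a, habmem⟩
    omega

end

lemma partsOf_empty : partsOf (∅ : Finset ℕ) = {∅} := by
  classical
  ext π
  simp only [partsOf, Finset.mem_filter, Finset.mem_powerset, Finset.mem_singleton]
  constructor
  · rintro ⟨hsub, hne, _, _⟩
    rw [Finset.powerset_empty, Finset.subset_singleton_iff] at hsub
    rcases hsub with h | h
    · exact h
    · exact absurd (h ▸ Finset.mem_singleton_self _) hne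
  · rintro rfl
    simp

noncomputable def expA {S : Type*} [CommRing S] (g : ℕ → S) : ℕ → S
  | 0 => 1
  | (n+1) => ∑ j ∈ Finset.range (n+1), (n.choose j : S) * g (j+1) * expA g (n - j)
  decreasing_by omega

variable {R : Type*} [CommRing R] (f : ℕ → R) in
lemma sum_partsOf_eq_expA (s : Finset ℕ) :
    ∑ π ∈ partsOf s, ∏ p ∈ π, f p.card = expA f s.card := by
  classical
  induction s using Finset.strongInduction with
  | _ s ih =>
    rcases s.eq_empty_or_nonempty with rfl | hs
    · rw [partsOf_empty]
      simp [expA]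
    · obtain ⟨a, haa⟩ := hs
      have hins : insert a (s.erase a) = s := Finset.insert_erase haa
      have hanot : a ∉ s.erase a := Finset.notMem_erase a s
      rw [← hins, sum_partsOf_insert f hanot]
      have hrec : ∀ B ∈ (s.erase a).powerset,
          f (B.card + 1) * ∑ ρ ∈ partsOf (s.erase a \ B), ∏ p ∈ ρ, f p.card
            = f (B.card + 1) * expA f ((s.erase a).card - B.card) := by
        intro B hB
        rw [Finset.mem_powerset] at hB
        have hss : s.erase a \ B ⊂ s :=
          Finset.ssubset_of_subset_of_ssubset (Finset.sdiff_subset)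
            (Finset.erase_ssubset haa)
        rw [ih _ hss, Finset.card_sdiff_of_subset hB]
      rw [Finset.sum_congr rfl hrec,
        Finset.sum_powerset_apply_card (fun j => f (j + 1) * expA f ((s.erase a).card - j)),
        Finset.card_insert_of_notMem hanot, expA]
      apply Finset.sum_congr rfl
      intro j hj
      rw [nsmul_eq_mul]
      ring


lemma natPartitionsOf_eq (n : ℕ) : natPartitionsOf n = partsOf (Finset.Icc 1 n) := rfl

section Analytic

variable {R : Type*} [CommRing R] [Algebra ℚ R] (f : ℕ → R)

noncomputable def cps (f : ℕ → R) : PowerSeries R :=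
  PowerSeries.mk fun m => if m = 0 then 0 else ((m.factorial : ℚ)⁻¹) • f m

lemma coeff_cps_zero : PowerSeries.coeff (R := R) 0 (cps f) = 0 := by
  simp [cps]

lemma coeff_cps_pow_eq_zero : ∀ k : ℕ, ∀ n : ℕ, n < k →
    PowerSeries.coeff (R := R) n (cps f ^ k) = 0 := by
  intro k
  induction k with
  | zero => intro n h; omega
  | succ k ih =>
    intro n h
    rw [pow_succ, PowerSeries.coeff_mul]
    apply Finset.sum_eq_zero
    rintro ⟨i, j⟩ hij
    rw [Finset.HasAntidiagonal.mem_antidiagonal] at hij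
    by_cases hi : i < k
    · rw [ih i hi, zero_mul]
    · have : j = 0 := by omega
      subst this
      rw [coeff_cps_zero, mul_zero]

lemma coeff_expPS (n : ℕ) :
    PowerSeries.coeff (R := R) n (expPS (cps f))
      = ∑ k ∈ Finset.range (n+1), ((k.factorial : ℚ)⁻¹) • PowerSeries.coeff (R := R) n (cps f ^ k) := by
  have : PowerSeries.coeff (R := R) n (expPS (cps f))
      = ∑ᶠ k : ℕ, ((k.factorial : ℚ)⁻¹) • PowerSeries.coeff (R := R) n (cps f ^ k) := by
    simp [expPS]
  rw [this]
  apply finsum_eq_finset_sum_of_support_subset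
  intro k hk
  simp only [Function.mem_support, ne_eq] at hk
  simp only [Finset.coe_range, Set.mem_Iio]
  by_contra hc
  exact hk (by rw [coeff_cps_pow_eq_zero f k n (by omega), smul_zero])





lemma natmul_qsmul (m : ℕ) (q : ℚ) (x : R) : ((m : R)) * (q • x) = ((m : ℚ) * q) • x := by
  rw [Algebra.smul_def, Algebra.smul_def, ← mul_assoc, map_mul, map_natCast]

lemma coeff_D_cps (i : ℕ) :
    PowerSeries.coeff (R := R) i (PowerSeries.derivative R (cps f)) = ((i.factorial : ℚ)⁻¹) • f (i+1) := by
  rw [PowerSeries.coeff_derivative]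
  have h1 : PowerSeries.coeff (R := R) (i+1) (cps f) = (((i+1).factorial : ℚ)⁻¹) • f (i+1) := by
    simp [cps]
  rw [h1]
  rw [mul_comm]
  have h2 : ((i:R) + 1) = (((i+1 : ℕ)) : R) := by push_cast; ring
  rw [h2, natmul_qsmul]
  congr 1
  rw [Nat.factorial_succ]
  have h0 : ((i.factorial : ℚ)) ≠ 0 := Nat.cast_ne_zero.2 (Nat.factorial_ne_zero i)
  push_cast
  field_simp

lemma coeff_expPS_trunc {i n : ℕ} (h : i ≤ n) :
    PowerSeries.coeff (R := R) i (expPS (cps f))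
      = ∑ k ∈ Finset.range (n+1), ((k.factorial : ℚ)⁻¹) • PowerSeries.coeff (R := R) i (cps f ^ k) := by
  rw [coeff_expPS]
  apply Finset.sum_subset
  · intro x hx; simp only [Finset.mem_range] at *; omega
  · intro x _ hx
    simp only [Finset.mem_range, not_lt] at hx
    rw [coeff_cps_pow_eq_zero f x i (by omega), smul_zero]

lemma analytic_rec (n : ℕ) :
    (((n+1).factorial : ℚ)) • PowerSeries.coeff (R := R) (n+1) (expPS (cps f))
      = ∑ j ∈ Finset.range (n+1), (n.choose j : R) * f (j+1) *
          (((n-j).factorial : ℚ) • PowerSeries.coeff (R := R) (n-j) (expPS (cps f))) := by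
  have step2 : ((n:R)+1) * PowerSeries.coeff (R := R) (n+1) (expPS (cps f))
      = ∑ j ∈ Finset.range (n+1), ((j.factorial : ℚ)⁻¹) •
          PowerSeries.coeff (R := R) n (PowerSeries.derivative R (cps f) * cps f ^ j) := by
    rw [coeff_expPS, Finset.mul_sum]
    rw [Finset.sum_range_succ']
    -- k = 0 term : coeff (n+1) of 1 is 0
    have h0 : ((Nat.factorial 0 : ℚ)⁻¹) • PowerSeries.coeff (R := R) (n+1) (cps f ^ 0) = 0 := by
      simp [PowerSeries.coeff_one]
    rw [h0, mul_zero, add_zero]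
    apply Finset.sum_congr rfl
    intro j _
    have hd : ((n:R)+1) * PowerSeries.coeff (R := R) (n+1) (cps f ^ (j+1))
        = PowerSeries.coeff (R := R) n (PowerSeries.derivative R (cps f ^ (j+1))) := by
      rw [PowerSeries.coeff_derivative, mul_comm]
    rw [mul_smul_comm, hd, Derivation.leibniz_pow]
    simp only [Nat.add_sub_cancel, smul_eq_mul]
    rw [map_nsmul, ← Nat.cast_smul_eq_nsmul ℚ (j+1), smul_smul]
    have h0 : ((j.factorial : ℚ)) ≠ 0 := Nat.cast_ne_zero.2 (Nat.factorial_ne_zero j)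
    have hsc : (((j+1).factorial : ℚ))⁻¹ * ((j+1 : ℕ) : ℚ) = ((j.factorial : ℚ))⁻¹ := by
      rw [Nat.factorial_succ]
      push_cast
      field_simp
    rw [hsc, mul_comm (cps f ^ j)]
  -- step 3/4
  have step4 : ((n:R)+1) * PowerSeries.coeff (R := R) (n+1) (expPS (cps f))
      = ∑ j ∈ Finset.range (n+1), ((j.factorial : ℚ)⁻¹) •
          (f (j+1) * PowerSeries.coeff (R := R) (n-j) (expPS (cps f))) := by
    rw [step2]
    have expand : ∀ k ∈ Finset.range (n+1), ((k.factorial : ℚ)⁻¹) •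
        PowerSeries.coeff (R := R) n (PowerSeries.derivative R (cps f) * cps f ^ k)
        = ∑ j ∈ Finset.range (n+1), (((j.factorial : ℚ)⁻¹) * ((k.factorial : ℚ)⁻¹)) •
            (f (j+1) * (if j ≤ n then PowerSeries.coeff (R := R) (n-j) (cps f ^ k) else 0)) := by
      intro k _
      rw [PowerSeries.coeff_mul, Finset.smul_sum]
      rw [Finset.Nat.sum_antidiagonal_eq_sum_range_succ_mk]
      apply Finset.sum_congr rfl
      intro j hj
      rw [Finset.mem_range] at hj
      rw [coeff_D_cps, if_pos (by omega)]
      rw [smul_mul_assoc, smul_smul, mul_comm ((k.factorial : ℚ)⁻¹)]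
    rw [Finset.sum_congr rfl expand, Finset.sum_comm]
    apply Finset.sum_congr rfl
    intro j hj
    rw [Finset.mem_range] at hj
    simp only [if_pos (by omega : j ≤ n)]
    rw [coeff_expPS_trunc f (by omega : n - j ≤ n), Finset.mul_sum, Finset.smul_sum]
    apply Finset.sum_congr rfl
    intro k _
    rw [mul_smul_comm, smul_smul]
  -- step 5
  have lhs5 : (((n+1).factorial : ℚ)) • PowerSeries.coeff (R := R) (n+1) (expPS (cps f))
      = ((n.factorial : ℚ)) • (((n:R)+1) * PowerSeries.coeff (R := R) (n+1) (expPS (cps f))) := by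
    have : ((n:R)+1) * PowerSeries.coeff (R := R) (n+1) (expPS (cps f))
        = ((n:ℚ)+1) • PowerSeries.coeff (R := R) (n+1) (expPS (cps f)) := by
      rw [Algebra.smul_def]
      push_cast
      simp
    rw [this, smul_smul, Nat.factorial_succ]
    push_cast
    ring_nf
  rw [lhs5, step4, Finset.smul_sum]
  apply Finset.sum_congr rfl
  intro j hj
  rw [Finset.mem_range] at hj
  rw [smul_smul]
  have hsc : (n.factorial : ℚ) * ((j.factorial : ℚ)⁻¹)
      = ((n.choose j : ℚ)) * ((n-j).factorial : ℚ) := by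
    have := Nat.choose_mul_factorial_mul_factorial (by omega : j ≤ n)
    have h2 : ((n.choose j : ℚ)) * (j.factorial : ℚ) * ((n-j).factorial : ℚ) = (n.factorial : ℚ) := by
      exact_mod_cast congrArg (Nat.cast : ℕ → ℚ) this
    have h0 : ((j.factorial : ℚ)) ≠ 0 := Nat.cast_ne_zero.2 (Nat.factorial_ne_zero j)
    field_simp
    linear_combination -h2
  rw [hsc]
  simp only [Algebra.smul_def, map_mul, map_natCast]
  ring

lemma fact_coeff_expPS_eq_expA (n : ℕ) :
    ((n.factorial : ℚ)) • PowerSeries.coeff (R := R) n (expPS (cps f)) = expA f n := by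
  induction n using Nat.strong_induction_on with
  | _ n ih =>
    match n with
    | 0 =>
      rw [expA]
      have : PowerSeries.coeff (R := R) 0 (expPS (cps f)) = 1 := by
        rw [coeff_expPS]
        simp
      rw [this]
      simp
    | (m+1) =>
      rw [expA, analytic_rec]
      apply Finset.sum_congr rfl
      intro j hj
      rw [Finset.mem_range] at hj
      rw [ih (m - j) (by omega)]


end Analytic

end ExpFormula

/-- classical exponential formula. -/
theorem classical_exponential_formula {R : Type*} [CommRing R] [Algebra ℚ R]
    (f : ℕ → R) (n : ℕ) :
    (n.factorial : R) *
        PowerSeries.coeff (R := R) n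
          (expPS (PowerSeries.mk fun m =>
            if m = 0 then 0 else ((m.factorial : ℚ)⁻¹) • f m))
      = ∑ π ∈ natPartitionsOf n, ∏ p ∈ π, f p.card := by
  have h1 := ExpFormula.fact_coeff_expPS_eq_expA f n
  have h2 := ExpFormula.sum_partsOf_eq_expA f (Finset.Icc 1 n)
  rw [ExpFormula.natPartitionsOf_eq, h2, Nat.card_Icc, Nat.add_sub_cancel, ← h1,
    Algebra.smul_def, map_natCast]
  rfl
end
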